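/- arXiv:1110.4302 — 2 statements merged into one kernel-verified Lean document; each statement's English description precedes it below -/
import Mathlib

section
/- Assume the graph G is connected and D > 0. Let a : [0,∞) → ℝ^L be a differentiable solution of a'(t) = f(a(t)) with a_i(0) ≥ 0 for all i and ∑_{k=1}^{L} a_k(0) > 0. Then for every index i, liminf_{t→∞} a_i(t) > 0; in particular no component of the solution tends to 0 as t → ∞. -/
open Finset Filter

/-- `auxN G κ a i = κ + ∑_{j ~ i} a_j`. -/
noncomputable def auxN {L : ℕ} (G : SimpleGraph (Fin L)) [DecidableRel G.Adj] (κ : ℝ)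
    (a : Fin L → ℝ) (i : Fin L) : ℝ :=
  κ + ∑ j ∈ G.neighborFinset i, a j

/-- The auxin transport vector field
`f_i(a) = D·∑_{k ~ i}(a_k − a_i) + T·∑_{k ~ i}(a_k·a_i/N_k(a) − a_i·a_k/N_i(a))`. -/
noncomputable def auxF {L : ℕ} (G : SimpleGraph (Fin L)) [DecidableRel G.Adj] (κ D T : ℝ)
    (a : Fin L → ℝ) (i : Fin L) : ℝ :=
  D * ∑ k ∈ G.neighborFinset i, (a k - a i) +
    T * ∑ k ∈ G.neighborFinset i,
      (a k * a i / auxN G κ a k - a i * a k / auxN G κ a i)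

lemma sum_neighbor_antisymm {L : ℕ} (G : SimpleGraph (Fin L)) [DecidableRel G.Adj]
    (g : Fin L → Fin L → ℝ) (hg : ∀ i k, g i k = - g k i) :
    ∑ i, ∑ k ∈ G.neighborFinset i, g i k = 0 := by
  have key : ∑ i, ∑ k ∈ G.neighborFinset i, g i k
      = ∑ i : Fin L, ∑ k : Fin L, if G.Adj i k then g i k else 0 := by
    refine Finset.sum_congr rfl fun i _ => ?_
    rw [SimpleGraph.neighborFinset_eq_filter, Finset.sum_filter]
  have h2 : ∑ i : Fin L, ∑ k : Fin L, (if G.Adj i k then g i k else 0)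
      = - ∑ i : Fin L, ∑ k : Fin L, (if G.Adj i k then g i k else 0) := by
    conv_lhs => rw [Finset.sum_comm]
    rw [← Finset.sum_neg_distrib]
    refine Finset.sum_congr rfl fun i _ => ?_
    rw [← Finset.sum_neg_distrib]
    refine Finset.sum_congr rfl fun k _ => ?_
    by_cases hadj : G.Adj i k
    · simp [hadj, hadj.symm, hg k i]
    · have h' : ¬ G.Adj k i := fun h => hadj h.symm
      simp [hadj, h']
  linarith [key, h2]

lemma sum_auxF_zero {L : ℕ} (G : SimpleGraph (Fin L)) [DecidableRel G.Adj] (κ D T : ℝ)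
    (a : Fin L → ℝ) : ∑ i, auxF G κ D T a i = 0 := by
  unfold auxF
  rw [Finset.sum_add_distrib, ← Finset.mul_sum, ← Finset.mul_sum,
    sum_neighbor_antisymm G (fun i k => a k - a i) (by intro i k; ring),
    sum_neighbor_antisymm G (fun i k => a k * a i / auxN G κ a k - a i * a k / auxN G κ a i)
      (by intro i k; ring)]
  ring

-- component derivative
lemma hasDerivAt_eval {L : ℕ} {a : ℝ → Fin L → ℝ} {v : Fin L → ℝ} {t : ℝ}
    (h : HasDerivAt a v t) (i : Fin L) : HasDerivAt (fun s => a s i) (v i) t :=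
  hasDerivAt_pi.mp h i

-- mass conservation
lemma mass_const {L : ℕ} (G : SimpleGraph (Fin L)) [DecidableRel G.Adj] (κ D T : ℝ)
    {a : ℝ → Fin L → ℝ}
    (hderiv : ∀ t, 0 ≤ t → HasDerivAt a (auxF G κ D T (a t)) t) :
    ∀ t, 0 ≤ t → ∑ k, a t k = ∑ k, a 0 k := by
  intro t ht
  have hd : ∀ s ∈ Set.Ico (0:ℝ) t, HasDerivWithinAt (fun s => ∑ k, a s k) 0 (Set.Ici s) s := by
    intro s hs
    have : HasDerivAt (fun s => ∑ k, a s k) (∑ k, auxF G κ D T (a s) k) s :=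
      HasDerivAt.fun_sum (fun k _ => hasDerivAt_eval (hderiv s hs.1) k)
    rw [sum_auxF_zero] at this
    exact this.hasDerivWithinAt
  have hc : ContinuousOn (fun s => ∑ k, a s k) (Set.Icc 0 t) := by
    intro s hs
    exact (HasDerivAt.continuousAt (HasDerivAt.fun_sum
      (fun k _ => hasDerivAt_eval (hderiv s hs.1) k))).continuousWithinAt
  exact constant_of_has_deriv_right_zero hc hd t (Set.mem_Icc.mpr ⟨ht, le_refl t⟩)

-- derivative at a left-local-min-from-above is ≤ 0
lemma deriv_nonpos_of_left {g : ℝ → ℝ} {t0 d : ℝ} (ht0 : 0 < t0)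
    (hd : HasDerivAt g d t0) (h0 : g t0 = 0) (hpos : ∀ s, 0 ≤ s → s < t0 → 0 ≤ g s) :
    d ≤ 0 := by
  have hslope := hasDerivWithinAt_iff_tendsto_slope.mp (hd.hasDerivWithinAt (s := Set.Iio t0))
  have hIio : Set.Iio t0 \ {t0} = Set.Iio t0 := by
    ext x
    simp only [Set.mem_diff, Set.mem_Iio, Set.mem_singleton_iff]
    exact ⟨fun h => h.1, fun h => ⟨h, ne_of_lt h⟩⟩
  rw [hIio] at hslope
  refine le_of_tendsto hslope ?_
  filter_upwards [Ioo_mem_nhdsLT_of_mem (Set.mem_Ioc.mpr ⟨ht0, le_refl t0⟩)] with s hs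
  rcases hs with ⟨hs0, hst⟩
  have h1 : 0 ≤ g s := hpos s hs0.le hst
  have h2 : s - t0 < 0 := by linarith
  rw [slope_def_field]
  rw [div_nonpos_iff]
  left
  constructor <;> [skip; linarith]
  rw [h0]; linarith

lemma abs_term_bound {x y N M e κ : ℝ} (hN : κ/2 ≤ N) (hκ : 0 < κ) (hM : 0 < M)
    (hx : |x| ≤ M) (hy : |y| = e) (he : 0 < e) : |x * y / N| ≤ 2 * M * e / κ := by
  have hNpos : 0 < N := by linarith
  rw [abs_div, abs_mul, abs_of_pos hNpos, div_le_div_iff₀ hNpos hκ, hy]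
  nlinarith [mul_nonneg (mul_nonneg (sub_nonneg.mpr hx) hκ.le) he.le,
    mul_nonneg (mul_nonneg (sub_nonneg.mpr hN) hM.le) he.le]

lemma sol_nonneg {L : ℕ} (hL : 1 ≤ L) (G : SimpleGraph (Fin L)) [DecidableRel G.Adj]
    (κ D T : ℝ) (hκ : 0 < κ) (hD : 0 < D) (hT : 0 < T)
    (a : ℝ → Fin L → ℝ)
    (hderiv : ∀ t, 0 ≤ t → HasDerivAt a (auxF G κ D T (a t)) t)
    (hnonneg : ∀ i, 0 ≤ a 0 i) :
    ∀ t, 0 ≤ t → ∀ i, 0 ≤ a t i := by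
  intro t ht i
  obtain ⟨Tend, hTend⟩ : ∃ Tend : ℝ, Tend = t + 1 := ⟨_, rfl⟩
  have hTpos : 0 < Tend := by rw [hTend]; linarith
  have htIcc : t ∈ Set.Icc (0:ℝ) Tend := ⟨ht, by rw [hTend]; linarith⟩
  have hcontAt : ∀ j, ∀ s : ℝ, 0 ≤ s → ContinuousAt (fun u => a u j) s := fun j s hs =>
    (hasDerivAt_eval (hderiv s hs) j).continuousAt
  -- bound M
  have hcont : ContinuousOn (fun s => ∑ j, |a s j|) (Set.Icc 0 Tend) := by
    intro s hs
    exact (ContinuousAt.continuousWithinAt (by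
      exact tendsto_finset_sum _ fun j _ => (hcontAt j s hs.1).abs))
  obtain ⟨C, hC⟩ := isCompact_Icc.exists_bound_of_continuousOn hcont
  obtain ⟨M, hMdef⟩ : ∃ M : ℝ, M = max C 1 := ⟨_, rfl⟩
  have hM1 : (1:ℝ) ≤ M := by rw [hMdef]; exact le_max_right _ _
  have hM0 : (0:ℝ) < M := by linarith
  have hM : ∀ s ∈ Set.Icc (0:ℝ) Tend, ∀ j, |a s j| ≤ M := by
    intro s hs j
    have h1 : |a s j| ≤ ∑ k, |a s k| :=
      Finset.single_le_sum (f := fun k => |a s k|) (fun k _ => abs_nonneg _) (Finset.mem_univ j)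
    have h2 := le_abs_self (∑ k, |a s k|)
    have h3 := hC s hs
    rw [Real.norm_eq_abs] at h3
    have h4 : C ≤ M := by rw [hMdef]; exact le_max_left _ _
    linarith
  have hLpos : (0:ℝ) < L := by exact_mod_cast Nat.lt_of_lt_of_le Nat.zero_lt_one hL
  obtain ⟨K, hKdef⟩ : ∃ K : ℝ, K = 4 * T * L * M / κ + 1 := ⟨_, rfl⟩
  have hKpos : 0 < K := by
    have : 0 ≤ 4 * T * (L:ℝ) * M / κ := by positivity
    rw [hKdef]; linarith
  obtain ⟨E, hEdef⟩ : ∃ E : ℝ, E = Real.exp (K * Tend) := ⟨_, rfl⟩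
  have hEpos : 0 < E := by rw [hEdef]; exact Real.exp_pos _
  have hE1 : 1 ≤ E := by rw [hEdef]; exact Real.one_le_exp (by positivity)
  obtain ⟨ε1, hε1def⟩ : ∃ e1 : ℝ, e1 = κ / (2 * L * E) := ⟨_, rfl⟩
  have hε1pos : 0 < ε1 := by rw [hε1def]; positivity
  have hexpcont : ∀ ε : ℝ, Continuous fun s : ℝ => ε * Real.exp (K * s) :=
    fun ε => continuous_const.mul (Real.continuous_exp.comp (continuous_const.mul continuous_id))
  -- main barrier claim
  have claim : ∀ ε : ℝ, 0 < ε → ε ≤ ε1 → ∀ s ∈ Set.Icc (0:ℝ) Tend, ∀ j,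
      0 < a s j + ε * Real.exp (K * s) := by
    intro ε hε hεle
    by_contra hcon
    push_neg at hcon
    obtain ⟨s₀, hs₀, j₀, hj₀⟩ := hcon
    obtain ⟨B, hBdef⟩ : ∃ B : Set ℝ,
        B = {s | s ∈ Set.Icc (0:ℝ) Tend ∧ ∃ j, a s j + ε * Real.exp (K * s) ≤ 0} := ⟨_, rfl⟩
    have hBmem : ∀ s : ℝ, s ∈ B ↔ s ∈ Set.Icc (0:ℝ) Tend ∧
        ∃ j, a s j + ε * Real.exp (K * s) ≤ 0 := by
      intro s; rw [hBdef]; rfl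
    have hBne : B.Nonempty := ⟨s₀, (hBmem s₀).mpr ⟨hs₀, j₀, hj₀⟩⟩
    have hgcont : ∀ j, ContinuousOn (fun s => a s j + ε * Real.exp (K * s))
        (Set.Icc (0:ℝ) Tend) := by
      intro j s hs
      exact ContinuousAt.continuousWithinAt ((hcontAt j s hs.1).add (hexpcont ε).continuousAt)
    have hBclosed : IsClosed B := by
      have hBeq : B = ⋃ j, (Set.Icc (0:ℝ) Tend ∩
          (fun s => a s j + ε * Real.exp (K * s)) ⁻¹' Set.Iic 0) := by
        ext s
        rw [hBmem s]
        simp only [Set.mem_iUnion, Set.mem_inter_iff, Set.mem_preimage, Set.mem_Iic]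
        constructor
        · rintro ⟨h1, j, h2⟩; exact ⟨j, h1, h2⟩
        · rintro ⟨j, h1, h2⟩; exact ⟨h1, j, h2⟩
      rw [hBeq]
      exact isClosed_iUnion_of_finite fun j =>
        (hgcont j).preimage_isClosed_of_isClosed isClosed_Icc isClosed_Iic
    have hbdd : BddBelow B := ⟨0, fun x hx => (((hBmem x).mp hx).1).1⟩
    obtain ⟨t0, ht0def⟩ : ∃ t0 : ℝ, t0 = sInf B := ⟨_, rfl⟩
    have ht0B : t0 ∈ B := ht0def ▸ hBclosed.csInf_mem hBne hbdd
    have ht0Icc : t0 ∈ Set.Icc (0:ℝ) Tend := ((hBmem t0).mp ht0B).1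
    obtain ⟨i0, hi0⟩ := ((hBmem t0).mp ht0B).2
    have ht0pos : 0 < t0 := by
      rcases eq_or_lt_of_le ht0Icc.1 with h | h
      · exfalso
        rw [← h] at hi0
        simp only [mul_zero, Real.exp_zero, mul_one] at hi0
        have := hnonneg i0
        linarith
      · exact h
    have hprev : ∀ s, 0 ≤ s → s < t0 → ∀ j, 0 < a s j + ε * Real.exp (K * s) := by
      intro s hs hst j
      by_contra hc
      push_neg at hc
      have hsB : s ∈ B := (hBmem s).mpr ⟨⟨hs, by linarith [ht0Icc.2]⟩, j, hc⟩
      have := csInf_le hbdd hsB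
      rw [← ht0def] at this
      linarith
    have hge : ∀ j, 0 ≤ a t0 j + ε * Real.exp (K * t0) := by
      intro j
      have htend : Filter.Tendsto (fun s => a s j + ε * Real.exp (K * s))
          (nhdsWithin t0 (Set.Iio t0)) (nhds (a t0 j + ε * Real.exp (K * t0))) :=
        (((hcontAt j t0 ht0pos.le).add (hexpcont ε).continuousAt)).tendsto.mono_left
          nhdsWithin_le_nhds
      refine ge_of_tendsto htend ?_
      filter_upwards [Ioo_mem_nhdsLT_of_mem (Set.mem_Ioc.mpr ⟨ht0pos, le_refl t0⟩)] with s hs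
      exact (hprev s hs.1.le hs.2 j).le
    obtain ⟨e, hedef⟩ : ∃ e : ℝ, e = ε * Real.exp (K * t0) := ⟨_, rfl⟩
    have hepos : 0 < e := by rw [hedef]; positivity
    have heq : a t0 i0 = -e := by
      rw [hedef]; have h1 := hge i0; linarith
    have heE : e ≤ ε * E := by
      rw [hedef, hEdef]
      have h1 : Real.exp (K * t0) ≤ Real.exp (K * Tend) := Real.exp_le_exp.mpr
        (mul_le_mul_of_nonneg_left ht0Icc.2 hKpos.le)
      nlinarith
    have heκ : (L:ℝ) * e ≤ κ / 2 := by
      have h0 : e ≤ ε1 * E := by nlinarith [heE, hεle, hEpos]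
      have h1 : (L:ℝ) * e ≤ L * (ε1 * E) := mul_le_mul_of_nonneg_left h0 hLpos.le
      have h2 : (L:ℝ) * (ε1 * E) = κ / 2 := by
        rw [hε1def]; field_simp
      linarith
    have hlow : ∀ j, -e ≤ a t0 j := fun j => by
      have := hge j; rw [hedef]; linarith
    have hMt : ∀ j, |a t0 j| ≤ M := hM t0 ht0Icc
    have hNlow : ∀ j, κ / 2 ≤ auxN G κ (a t0) j := by
      intro j
      have h2 : ∑ l ∈ G.neighborFinset j, (-e) ≤ ∑ l ∈ G.neighborFinset j, a t0 l :=
        Finset.sum_le_sum fun l _ => hlow l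
      have h3 : ∑ l ∈ G.neighborFinset j, (-e) = -(((G.neighborFinset j).card : ℝ) * e) := by
        rw [Finset.sum_const]; push_cast; ring
      have h4 : ((G.neighborFinset j).card : ℝ) ≤ L := by
        have h5 := Finset.card_le_univ (G.neighborFinset j)
        simp only [Finset.card_univ, Fintype.card_fin] at h5
        exact_mod_cast h5
      have h7 : -((L:ℝ) * e) ≤ -(((G.neighborFinset j).card : ℝ) * e) := by nlinarith
      unfold auxN
      rw [h3] at h2
      linarith
    -- derivative inequality at t0
    have hexp : HasDerivAt (fun s : ℝ => ε * Real.exp (K * s))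
        (ε * (Real.exp (K * t0) * (K * 1))) t0 :=
      (((hasDerivAt_id t0).const_mul K).exp).const_mul ε
    have hd : HasDerivAt (fun s => a s i0 + ε * Real.exp (K * s))
        (auxF G κ D T (a t0) i0 + ε * (Real.exp (K * t0) * (K * 1))) t0 :=
      (hasDerivAt_eval (hderiv t0 ht0pos.le) i0).add hexp
    have hdle : auxF G κ D T (a t0) i0 + ε * (Real.exp (K * t0) * (K * 1)) ≤ 0 := by
      refine deriv_nonpos_of_left ht0pos hd (by rw [heq, hedef]; ring) ?_
      intro s hs hst
      exact (hprev s hs hst i0).le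
    -- lower bound on auxF
    have hS1 : 0 ≤ ∑ k ∈ G.neighborFinset i0, (a t0 k - a t0 i0) := by
      refine Finset.sum_nonneg fun k _ => ?_
      rw [heq]; linarith [hlow k]
    have hS2 : |∑ k ∈ G.neighborFinset i0,
        (a t0 k * a t0 i0 / auxN G κ (a t0) k - a t0 i0 * a t0 k / auxN G κ (a t0) i0)|
        ≤ (L:ℝ) * (4 * M * e / κ) := by
      have hstep : ∀ k, |a t0 k * a t0 i0 / auxN G κ (a t0) k -
          a t0 i0 * a t0 k / auxN G κ (a t0) i0| ≤ 4 * M * e / κ := by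
        intro k
        have hNk := hNlow k
        have hNi := hNlow i0
        have hNkpos : 0 < auxN G κ (a t0) k := by linarith
        have hNipos : 0 < auxN G κ (a t0) i0 := by linarith
        have hai : |a t0 i0| = e := by rw [heq, abs_neg, abs_of_pos hepos]
        have hterm1 : |a t0 k * a t0 i0 / auxN G κ (a t0) k| ≤ 2 * M * e / κ :=
          abs_term_bound hNk hκ hM0 (hMt k) hai hepos
        have hterm2 : |a t0 i0 * a t0 k / auxN G κ (a t0) i0| ≤ 2 * M * e / κ := by
          rw [mul_comm (a t0 i0) (a t0 k)]
          exact abs_term_bound hNi hκ hM0 (hMt k) hai hepos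
        calc |a t0 k * a t0 i0 / auxN G κ (a t0) k - a t0 i0 * a t0 k / auxN G κ (a t0) i0|
            ≤ |a t0 k * a t0 i0 / auxN G κ (a t0) k| +
              |a t0 i0 * a t0 k / auxN G κ (a t0) i0| := abs_sub _ _
          _ ≤ 2 * M * e / κ + 2 * M * e / κ := add_le_add hterm1 hterm2
          _ = 4 * M * e / κ := by ring
      have h4 : ((G.neighborFinset i0).card : ℝ) ≤ L := by
        have h5 := Finset.card_le_univ (G.neighborFinset i0)
        simp only [Finset.card_univ, Fintype.card_fin] at h5
        exact_mod_cast h5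
      have hconst : (0:ℝ) ≤ 4 * M * e / κ := by positivity
      calc |∑ k ∈ G.neighborFinset i0,
          (a t0 k * a t0 i0 / auxN G κ (a t0) k - a t0 i0 * a t0 k / auxN G κ (a t0) i0)|
          ≤ ∑ k ∈ G.neighborFinset i0,
            |a t0 k * a t0 i0 / auxN G κ (a t0) k - a t0 i0 * a t0 k / auxN G κ (a t0) i0| :=
            Finset.abs_sum_le_sum_abs _ _
        _ ≤ ∑ _k ∈ G.neighborFinset i0, (4 * M * e / κ) :=
            Finset.sum_le_sum fun k _ => hstep k
        _ = ((G.neighborFinset i0).card : ℝ) * (4 * M * e / κ) := by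
            rw [Finset.sum_const]; push_cast; ring
        _ ≤ (L:ℝ) * (4 * M * e / κ) := mul_le_mul_of_nonneg_right h4 hconst
    have hFlow : -(T * ((L:ℝ) * (4 * M * e / κ))) ≤ auxF G κ D T (a t0) i0 := by
      unfold auxF
      have h1 : 0 ≤ D * ∑ k ∈ G.neighborFinset i0, (a t0 k - a t0 i0) :=
        mul_nonneg hD.le hS1
      have h2 := (abs_le.mp hS2).1
      have h3 := mul_le_mul_of_nonneg_left h2 hT.le
      linarith
    have hfinal : auxF G κ D T (a t0) i0 ≤ -(K * e) := by
      have h9 : ε * (Real.exp (K * t0) * (K * 1)) = K * e := by rw [hedef]; ring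
      linarith
    have hcmp : K * e ≤ T * ((L:ℝ) * (4 * M * e / κ)) := by linarith
    have hke : K * e = (4 * T * L * M / κ) * e + e := by rw [hKdef]; ring
    have hte : T * ((L:ℝ) * (4 * M * e / κ)) = (4 * T * L * M / κ) * e := by ring
    rw [hke, hte] at hcmp
    linarith
  -- conclude nonnegativity
  by_contra hneg
  push_neg at hneg
  obtain ⟨ε, hεdef⟩ : ∃ ε : ℝ, ε = min ε1 (-(a t i) / (2 * E)) := ⟨_, rfl⟩
  have hεpos : 0 < ε := by
    rw [hεdef]
    exact lt_min hε1pos (div_pos (by linarith) (by linarith))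
  have h1 := claim ε hεpos (hεdef ▸ min_le_left _ _) t htIcc i
  have hTle : t ≤ Tend := by rw [hTend]; linarith
  have h2 : Real.exp (K * t) ≤ E := by
    rw [hEdef]
    exact Real.exp_le_exp.mpr (mul_le_mul_of_nonneg_left hTle hKpos.le)
  have h3 : ε * Real.exp (K * t) ≤ ε * E := mul_le_mul_of_nonneg_left h2 hεpos.le
  have h4 : ε * E ≤ -(a t i) / 2 := by
    have h5 : ε ≤ -(a t i) / (2 * E) := hεdef ▸ min_le_right _ _
    calc ε * E ≤ (-(a t i) / (2 * E)) * E := mul_le_mul_of_nonneg_right h5 hEpos.le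
      _ = -(a t i) / 2 := by field_simp
  linarith

lemma card_neighbor_le {L : ℕ} (G : SimpleGraph (Fin L)) [DecidableRel G.Adj] (i : Fin L) :
    ((G.neighborFinset i).card : ℝ) ≤ L := by
  have h5 := Finset.card_le_univ (G.neighborFinset i)
  simp only [Finset.card_univ, Fintype.card_fin] at h5
  exact_mod_cast h5

lemma auxF_lower {L : ℕ} (G : SimpleGraph (Fin L)) [DecidableRel G.Adj] {κ D T : ℝ}
    (hκ : 0 < κ) (hD : 0 < D) (hT : 0 < T) {b : Fin L → ℝ} (hb : ∀ j, 0 ≤ b j)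
    {S0 : ℝ} (hS : ∑ k, b k = S0) (i : Fin L) :
    D * (∑ k ∈ G.neighborFinset i, b k) - (D * L + T * S0 / κ) * b i ≤ auxF G κ D T b i := by
  have hN : ∀ j, κ ≤ auxN G κ b j := by
    intro j
    have : 0 ≤ ∑ l ∈ G.neighborFinset j, b l := Finset.sum_nonneg fun l _ => hb l
    unfold auxN; linarith
  have hsub : ∑ k ∈ G.neighborFinset i, b k ≤ S0 := by
    rw [← hS]
    exact Finset.sum_le_sum_of_subset_of_nonneg (Finset.subset_univ _) fun k _ _ => hb k
  have hfirst : (∑ k ∈ G.neighborFinset i, b k) - (L:ℝ) * b i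
      ≤ ∑ k ∈ G.neighborFinset i, (b k - b i) := by
    rw [Finset.sum_sub_distrib, Finset.sum_const, nsmul_eq_mul]
    have := card_neighbor_le G i
    nlinarith [hb i]
  have hsecond : -(T * S0 / κ * b i) ≤ T * ∑ k ∈ G.neighborFinset i,
      (b k * b i / auxN G κ b k - b i * b k / auxN G κ b i) := by
    have hterm : ∀ k ∈ G.neighborFinset i, -(b i * b k / κ)
        ≤ b k * b i / auxN G κ b k - b i * b k / auxN G κ b i := by
      intro k _
      have hNk := hN k
      have hNi := hN i
      have hNkpos : 0 < auxN G κ b k := lt_of_lt_of_le hκ hNk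
      have hNipos : 0 < auxN G κ b i := lt_of_lt_of_le hκ hNi
      have h1 : 0 ≤ b k * b i / auxN G κ b k :=
        div_nonneg (mul_nonneg (hb k) (hb i)) hNkpos.le
      have h2 : b i * b k / auxN G κ b i ≤ b i * b k / κ := by
        rw [div_le_div_iff₀ hNipos hκ]
        nlinarith [mul_nonneg (hb i) (hb k)]
      linarith
    have hsum : -(b i * S0 / κ) ≤ ∑ k ∈ G.neighborFinset i,
        (b k * b i / auxN G κ b k - b i * b k / auxN G κ b i) := by
      have h3 := Finset.sum_le_sum hterm
      have h4 : ∑ k ∈ G.neighborFinset i, -(b i * b k / κ)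
          = -(b i * (∑ k ∈ G.neighborFinset i, b k) / κ) := by
        rw [Finset.mul_sum, Finset.sum_div, ← Finset.sum_neg_distrib]
      have h5 : -(b i * S0 / κ) ≤ -(b i * (∑ k ∈ G.neighborFinset i, b k) / κ) := by
        rw [neg_le_neg_iff, div_le_div_iff₀ hκ hκ]
        nlinarith [mul_nonneg (mul_nonneg (sub_nonneg.mpr hsub) (hb i)) hκ.le]
      rw [h4] at h3
      linarith
    calc -(T * S0 / κ * b i) = T * (-(b i * S0 / κ)) := by ring
      _ ≤ T * ∑ k ∈ G.neighborFinset i,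
          (b k * b i / auxN G κ b k - b i * b k / auxN G κ b i) :=
        mul_le_mul_of_nonneg_left hsum hT.le
  unfold auxF
  have hfirst' : D * ((∑ k ∈ G.neighborFinset i, b k) - (L:ℝ) * b i)
      ≤ D * ∑ k ∈ G.neighborFinset i, (b k - b i) :=
    mul_le_mul_of_nonneg_left hfirst hD.le
  nlinarith [hfirst', hsecond]

lemma monoOn_of_hasDerivAt_nonneg {u v : ℝ → ℝ} {t0 : ℝ}
    (hd : ∀ t, t0 ≤ t → HasDerivAt u (v t) t) (hv : ∀ t, t0 ≤ t → 0 ≤ v t) :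
    MonotoneOn u (Set.Ici t0) := by
  refine monotoneOn_of_deriv_nonneg (convex_Ici t0) ?_ ?_ ?_
  · intro s hs
    exact ((hd s hs).continuousAt).continuousWithinAt
  · intro s hs
    rw [interior_Ici] at hs
    exact ((hd s hs.le).differentiableAt).differentiableWithinAt
  · intro s hs
    rw [interior_Ici] at hs
    rw [(hd s hs.le).deriv]
    exact hv s hs.le

/-- For a connected graph, `D > 0`, and a nonnegative solution with positive
total initial mass, each component has strictly positive inferior limit at infinity; in
particular no component tends to `0`. -/
theorem auxin_liminf_pos {L : ℕ} (hL : 1 ≤ L) (G : SimpleGraph (Fin L)) [DecidableRel G.Adj]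
    (hG : G.Connected) (κ D T : ℝ) (hκ : 0 < κ) (hD : 0 < D) (hT : 0 < T)
    (a : ℝ → Fin L → ℝ)
    (hderiv : ∀ t, 0 ≤ t → HasDerivAt a (auxF G κ D T (a t)) t)
    (hnonneg : ∀ i, 0 ≤ a 0 i)
    (hpos : 0 < ∑ k, a 0 k) :
    ∀ i, 0 < Filter.liminf (fun t => a t i) Filter.atTop ∧
      ¬ Filter.Tendsto (fun t => a t i) Filter.atTop (nhds 0) := by
  have hnn : ∀ t, 0 ≤ t → ∀ j, 0 ≤ a t j :=
    sol_nonneg hL G κ D T hκ hD hT a hderiv hnonneg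
  obtain ⟨S0, hS0def⟩ : ∃ S0 : ℝ, S0 = ∑ k, a 0 k := ⟨_, rfl⟩
  have hS0pos : 0 < S0 := hS0def ▸ hpos
  have hmass : ∀ t, 0 ≤ t → ∑ k, a t k = S0 := by
    intro t ht; rw [hS0def]; exact mass_const G κ D T hderiv t ht
  have hLpos : (0:ℝ) < L := by exact_mod_cast Nat.lt_of_lt_of_le Nat.zero_lt_one hL
  obtain ⟨Cc, hCcdef⟩ : ∃ Cc : ℝ, Cc = D * L + T * S0 / κ := ⟨_, rfl⟩
  have hCcpos : 0 < Cc := by rw [hCcdef]; positivity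
  -- derivative of u_i
  have hu_deriv : ∀ (i : Fin L) (t : ℝ), 0 ≤ t →
      HasDerivAt (fun s => a s i * Real.exp (Cc * s))
        ((auxF G κ D T (a t) i + Cc * a t i) * Real.exp (Cc * t)) t := by
    intro i t ht
    have h1 := (hasDerivAt_eval (hderiv t ht) i).mul (((hasDerivAt_id t).const_mul Cc).exp)
    have h2 : auxF G κ D T (a t) i * Real.exp (Cc * t) +
        a t i * (Real.exp (Cc * t) * (Cc * 1)) =
        (auxF G κ D T (a t) i + Cc * a t i) * Real.exp (Cc * t) := by ring
    exact h2 ▸ h1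
  -- derivative term is at least D * (neighbor sum) ≥ 0
  have hdrift : ∀ (i : Fin L) (t : ℝ), 0 ≤ t →
      D * (∑ k ∈ G.neighborFinset i, a t k) ≤ auxF G κ D T (a t) i + Cc * a t i := by
    intro i t ht
    have := auxF_lower G hκ hD hT (hnn t ht) (hmass t ht) i
    rw [hCcdef]; linarith
  have hu_mono : ∀ i : Fin L, MonotoneOn (fun s => a s i * Real.exp (Cc * s))
      (Set.Ici (0:ℝ)) := by
    intro i
    refine monoOn_of_hasDerivAt_nonneg (v := fun t =>
      (auxF G κ D T (a t) i + Cc * a t i) * Real.exp (Cc * t)) (hu_deriv i) ?_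
    intro t ht
    have h1 := hdrift i t ht
    have h2 : 0 ≤ D * (∑ k ∈ G.neighborFinset i, a t k) :=
      mul_nonneg hD.le (Finset.sum_nonneg fun k _ => hnn t ht k)
    exact mul_nonneg (by linarith) (Real.exp_pos _).le
  -- one-step propagation along an edge
  have hstep : ∀ j v : Fin L, G.Adj j v → ∀ t : ℝ, 0 ≤ t →
      D * Real.exp (-Cc) * a t j ≤ a (t + 1) v := by
    intro j v hadj t ht
    obtain ⟨P, hPdef⟩ : ∃ P : ℝ, P = D * (a t j * Real.exp (Cc * t)) := ⟨_, rfl⟩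
    have hw : MonotoneOn (fun τ => a τ v * Real.exp (Cc * τ) - P * τ) (Set.Ici t) := by
      refine monoOn_of_hasDerivAt_nonneg (v := fun τ =>
        (auxF G κ D T (a τ) v + Cc * a τ v) * Real.exp (Cc * τ) - P) ?_ ?_
      · intro τ hτ
        have hlin : HasDerivAt (fun τ : ℝ => P * τ) P τ := by
          simpa using (hasDerivAt_id τ).const_mul P
        exact (hu_deriv v τ (le_trans ht hτ)).sub hlin
      · intro τ hτ
        have hτ0 : 0 ≤ τ := le_trans ht hτ
        have h1 := hdrift v τ hτ0
        have h2 : a τ j ≤ ∑ k ∈ G.neighborFinset v, a τ k :=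
          Finset.single_le_sum (f := fun k => a τ k) (fun k _ => hnn τ hτ0 k)
            ((SimpleGraph.mem_neighborFinset G v j).mpr hadj.symm)
        have h3 : D * a τ j ≤ D * (∑ k ∈ G.neighborFinset v, a τ k) :=
          mul_le_mul_of_nonneg_left h2 hD.le
        have h4 : D * (a τ j * Real.exp (Cc * τ)) ≤
            (auxF G κ D T (a τ) v + Cc * a τ v) * Real.exp (Cc * τ) := by
          have h5 : D * a τ j * Real.exp (Cc * τ) ≤
              (auxF G κ D T (a τ) v + Cc * a τ v) * Real.exp (Cc * τ) :=
            mul_le_mul_of_nonneg_right (by linarith) (Real.exp_pos _).le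
          linarith [h5]
        have h66 := hu_mono j (Set.mem_Ici.mpr ht) (Set.mem_Ici.mpr hτ0) hτ
        simp only at h66
        have h6 : P ≤ D * (a τ j * Real.exp (Cc * τ)) := by
          rw [hPdef]
          exact mul_le_mul_of_nonneg_left h66 hD.le
        show 0 ≤ (auxF G κ D T (a τ) v + Cc * a τ v) * Real.exp (Cc * τ) - P
        linarith
    have h7 := hw (Set.mem_Ici.mpr (le_refl t)) (Set.mem_Ici.mpr (by linarith : t ≤ t + 1))
      (by linarith : t ≤ t + 1)
    simp only at h7
    have h8 : 0 ≤ a t v * Real.exp (Cc * t) :=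
      mul_nonneg (hnn t ht v) (Real.exp_pos _).le
    have h9 : P ≤ a (t+1) v * Real.exp (Cc * (t+1)) := by nlinarith [h7, h8]
    have hE1 : (0:ℝ) < Real.exp (Cc * (t+1)) := Real.exp_pos _
    refine le_of_mul_le_mul_right ?_ hE1
    have h10 : D * Real.exp (-Cc) * a t j * Real.exp (Cc * (t+1)) = P := by
      rw [hPdef]
      have h11 : Real.exp (-Cc) * Real.exp (Cc * (t+1)) = Real.exp (Cc * t) := by
        rw [← Real.exp_add]; congr 1; ring
      linear_combination (D * a t j) * h11
    rw [h10]
    exact h9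
  intro i
  obtain ⟨m, hmdef⟩ : ∃ m : ℝ, m = D * Real.exp (-Cc) := ⟨_, rfl⟩
  have hmpos : 0 < m := by rw [hmdef]; positivity
  obtain ⟨r, hrdef⟩ : ∃ r : ℝ, r = min m (Real.exp (-Cc)) := ⟨_, rfl⟩
  have hrpos : 0 < r := by rw [hrdef]; exact lt_min hmpos (Real.exp_pos _)
  have hrm : r ≤ m := hrdef ▸ min_le_left _ _
  have hre : r ≤ Real.exp (-Cc) := hrdef ▸ min_le_right _ _
  -- chain along a walk
  have chain : ∀ (j j' : Fin L) (p : G.Walk j j') (t : ℝ), 0 ≤ t →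
      m ^ p.length * a t j ≤ a (t + p.length) j' := by
    intro j j' p
    induction p with
    | nil => intro t ht; simp
    | @cons j v w hadj q ih =>
      intro t ht
      have h1 : m * a t j ≤ a (t + 1) v := by
        rw [hmdef]; exact hstep j v hadj t ht
      have h2 := ih (t + 1) (by linarith)
      have h3 : m ^ q.length * (m * a t j) ≤ m ^ q.length * a (t+1) v :=
        mul_le_mul_of_nonneg_left h1 (pow_nonneg hmpos.le _)
      have h4 : (t + 1) + (q.length : ℝ) = t + ((SimpleGraph.Walk.cons hadj q).length : ℝ) := by
        rw [SimpleGraph.Walk.length_cons]; push_cast; ring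
      calc m ^ (SimpleGraph.Walk.cons hadj q).length * a t j
          = m ^ q.length * (m * a t j) := by
            rw [SimpleGraph.Walk.length_cons]; ring
        _ ≤ m ^ q.length * a (t+1) v := h3
        _ ≤ a ((t + 1) + q.length) w := h2
        _ = a (t + ((SimpleGraph.Walk.cons hadj q).length : ℝ)) w := by rw [h4]
  -- uniform lower bound for s ≥ L
  have hfloor : ∀ s : ℝ, (L:ℝ) ≤ s → r ^ L * (S0 / L) ≤ a s i := by
    intro s hs
    obtain ⟨t0, ht0def⟩ : ∃ t0 : ℝ, t0 = s - L := ⟨_, rfl⟩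
    have ht0 : 0 ≤ t0 := by rw [ht0def]; linarith
    -- find a heavy vertex
    have hex : ∃ k : Fin L, S0 / L ≤ a t0 k := by
      have hne : (Finset.univ : Finset (Fin L)).Nonempty := by
        rw [← Finset.card_pos]; simp; omega
      have hsum : ∑ _k : Fin L, (S0 / L) ≤ ∑ k, a t0 k := by
        rw [hmass t0 ht0, Finset.sum_const]
        simp only [Finset.card_univ, Fintype.card_fin, nsmul_eq_mul]
        rw [mul_div_cancel₀]
        exact ne_of_gt hLpos
      obtain ⟨k, _, hk⟩ := Finset.exists_le_of_sum_le hne hsum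
      exact ⟨k, hk⟩
    obtain ⟨k, hk⟩ := hex
    obtain ⟨p0⟩ := hG.preconnected k i
    obtain ⟨p, hpath⟩ : ∃ p : G.Walk k i, p.IsPath := ⟨p0.bypass, p0.bypass_isPath⟩
    have hd : p.length < L := by
      have := hpath.length_lt
      simpa using this
    have hak : 0 ≤ a t0 k := hnn t0 ht0 k
    have hchain := chain k i p t0 ht0
    have hX : m ^ p.length * (S0 / L) ≤ a (t0 + p.length) i := by
      have := mul_le_mul_of_nonneg_left hk (pow_nonneg hmpos.le p.length)
      linarith
    -- decay from t0 + d to s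
    have hle : t0 + (p.length : ℝ) ≤ s := by
      rw [ht0def]
      have : (p.length : ℝ) ≤ L := by exact_mod_cast hd.le
      linarith
    have ht0d : 0 ≤ t0 + (p.length : ℝ) := by positivity
    have hmon := hu_mono i (Set.mem_Ici.mpr ht0d)
      (Set.mem_Ici.mpr (le_trans ht0d hle)) hle
    simp only at hmon
    have hEs : (0:ℝ) < Real.exp (Cc * s) := Real.exp_pos _
    have hdecay : a (t0 + p.length) i * Real.exp (-Cc * (s - (t0 + p.length))) ≤ a s i := by
      refine le_of_mul_le_mul_right ?_ hEs
      have he2 : Real.exp (-Cc * (s - (t0 + (p.length:ℝ)))) * Real.exp (Cc * s)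
          = Real.exp (Cc * (t0 + (p.length:ℝ))) := by
        rw [← Real.exp_add]; congr 1; ring
      rw [mul_assoc, he2]
      exact hmon
    -- assemble
    have hexpfac : r ^ (L - p.length) ≤ Real.exp (-Cc * (s - (t0 + (p.length:ℝ)))) := by
      have hcast : s - (t0 + (p.length:ℝ)) = ((L - p.length : ℕ) : ℝ) := by
        rw [ht0def, Nat.cast_sub hd.le]; ring
      rw [hcast]
      have h1 : Real.exp (-Cc * ((L - p.length : ℕ) : ℝ))
          = (Real.exp (-Cc)) ^ (L - p.length) := by
        rw [← Real.exp_nat_mul]; congr 1; ring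
      rw [h1]
      exact pow_le_pow_left₀ hrpos.le hre _
    have hrd : r ^ p.length ≤ m ^ p.length := pow_le_pow_left₀ hrpos.le hrm _
    have hXnn : 0 ≤ m ^ p.length * (S0 / L) :=
      mul_nonneg (pow_nonneg hmpos.le _) (by positivity)
    have h20 : r ^ L * (S0 / L) ≤
        Real.exp (-Cc * (s - (t0 + (p.length:ℝ)))) * (m ^ p.length * (S0 / L)) := by
      have h21 : r ^ L = r ^ (L - p.length) * r ^ p.length := by
        rw [← pow_add]; congr 1; omega
      rw [h21]
      have h22 : r ^ (L - p.length) * r ^ p.length * (S0 / L)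
          ≤ r ^ (L - p.length) * (m ^ p.length * (S0 / L)) := by
        rw [mul_assoc]
        refine mul_le_mul_of_nonneg_left ?_ (pow_nonneg hrpos.le _)
        exact mul_le_mul_of_nonneg_right hrd (by positivity)
      refine le_trans h22 (mul_le_mul_of_nonneg_right hexpfac hXnn)
    have h23 : Real.exp (-Cc * (s - (t0 + (p.length:ℝ)))) * (m ^ p.length * (S0 / L))
        ≤ Real.exp (-Cc * (s - (t0 + (p.length:ℝ)))) * a (t0 + p.length) i :=
      mul_le_mul_of_nonneg_left hX (Real.exp_pos _).le
    calc r ^ L * (S0 / L) ≤ _ := h20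
      _ ≤ _ := h23
      _ = a (t0 + p.length) i * Real.exp (-Cc * (s - (t0 + p.length))) := by ring
      _ ≤ a s i := hdecay
  -- conclude
  obtain ⟨c, hcdef⟩ : ∃ c : ℝ, c = r ^ L * (S0 / L) := ⟨_, rfl⟩
  have hcpos : 0 < c := by rw [hcdef]; positivity
  have hev : ∀ᶠ s in Filter.atTop, c ≤ a s i := by
    filter_upwards [Filter.eventually_ge_atTop (L:ℝ)] with s hs
    rw [hcdef]; exact hfloor s hs
  have hub : ∀ᶠ s in Filter.atTop, a s i ≤ S0 := by
    filter_upwards [Filter.eventually_ge_atTop (0:ℝ)] with s hs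
    rw [← hmass s hs]
    exact Finset.single_le_sum (f := fun k => a s k) (fun k _ => hnn s hs k)
      (Finset.mem_univ i)
  have hcobdd : Filter.IsCoboundedUnder (· ≥ ·) Filter.atTop (fun s => a s i) :=
    (Filter.isBoundedUnder_of_eventually_le hub).isCoboundedUnder_ge
  have hliminf : c ≤ Filter.liminf (fun t => a t i) Filter.atTop :=
    Filter.le_liminf_of_le hcobdd hev
  have hlpos : 0 < Filter.liminf (fun t => a t i) Filter.atTop := lt_of_lt_of_le hcpos hliminf
  refine ⟨hlpos, fun htend => ?_⟩
  have := htend.liminf_eq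
  rw [this] at hlpos
  exact lt_irrefl 0 hlpos
end

section
/- Assume D = 0 and T = 1. For every x ∈ ℝ^L with all components ≥ 0, the dissipation ∑_{k}∑_{j ~ k} q_{kj}(x)·q_{jk}(x)·( N_k(x) − N_j(x) )² vanishes if and only if x is a critical point, i.e. f(x) = 0. -/
open Finset Filter

lemma aux_swap_sum {L : ℕ} (G : SimpleGraph (Fin L)) [DecidableRel G.Adj]
    (g : Fin L → Fin L → ℝ) :
    ∑ k, ∑ j ∈ G.neighborFinset k, g k j = ∑ k, ∑ j ∈ G.neighborFinset k, g j k := by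
  have h1 : ∀ k : Fin L, ∑ j ∈ G.neighborFinset k, g k j
      = ∑ j, if j ∈ G.neighborFinset k then g k j else 0 := by
    intro k
    rw [Finset.sum_ite_mem, Finset.univ_inter]
  have h2 : ∀ k : Fin L, ∑ j ∈ G.neighborFinset k, g j k
      = ∑ j, if j ∈ G.neighborFinset k then g j k else 0 := by
    intro k
    rw [Finset.sum_ite_mem, Finset.univ_inter]
  simp_rw [h1, h2]
  rw [Finset.sum_comm]
  apply Finset.sum_congr rfl
  intro j _
  apply Finset.sum_congr rfl
  intro k _
  simp only [SimpleGraph.mem_neighborFinset]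
  exact if_congr (G.adj_comm k j) rfl rfl

/-- For pure transport (`D = 0`, `T = 1`) and nonnegative `x`, the dissipation
`∑_k ∑_{j~k} q_{kj}(x) q_{jk}(x) (N_k(x) − N_j(x))²` vanishes iff `x` is a critical point. -/
theorem auxin_dissipation_zero_iff_critical {L : ℕ} (hL : 1 ≤ L) (G : SimpleGraph (Fin L))
    [DecidableRel G.Adj] (κ : ℝ) (hκ : 0 < κ)
    (x : Fin L → ℝ) (hx : ∀ i, 0 ≤ x i) :
    (∑ k, ∑ j ∈ G.neighborFinset k,
        (x j / auxN G κ x k) * (x k / auxN G κ x j) *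
          (auxN G κ x k - auxN G κ x j) ^ 2 = 0) ↔
      (∀ i, auxF G κ 0 1 x i = 0) := by
  have hN : ∀ i, 0 < auxN G κ x i := by
    intro i
    have : 0 ≤ ∑ j ∈ G.neighborFinset i, x j :=
      Finset.sum_nonneg fun j _ => hx j
    unfold auxN; linarith
  have hN0 : ∀ i, auxN G κ x i ≠ 0 := fun i => ne_of_gt (hN i)
  constructor
  · -- dissipation zero → critical
    intro h i
    have hnn : ∀ k ∈ (Finset.univ : Finset (Fin L)),
        0 ≤ ∑ j ∈ G.neighborFinset k,
          (x j / auxN G κ x k) * (x k / auxN G κ x j) *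
            (auxN G κ x k - auxN G κ x j) ^ 2 := by
      intro k _
      apply Finset.sum_nonneg
      intro j _
      exact mul_nonneg (mul_nonneg (div_nonneg (hx j) (hN k).le)
        (div_nonneg (hx k) (hN j).le)) (sq_nonneg _)
    have hterm : ∀ k, ∀ j ∈ G.neighborFinset k,
        (x j / auxN G κ x k) * (x k / auxN G κ x j) *
          (auxN G κ x k - auxN G κ x j) ^ 2 = 0 := by
      intro k j hj
      have hk0 := (Finset.sum_eq_zero_iff_of_nonneg hnn).mp h k (Finset.mem_univ k)
      have hnn2 : ∀ j ∈ G.neighborFinset k,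
          0 ≤ (x j / auxN G κ x k) * (x k / auxN G κ x j) *
            (auxN G κ x k - auxN G κ x j) ^ 2 := by
        intro j _
        exact mul_nonneg (mul_nonneg (div_nonneg (hx j) (hN k).le)
          (div_nonneg (hx k) (hN j).le)) (sq_nonneg _)
      exact (Finset.sum_eq_zero_iff_of_nonneg hnn2).mp hk0 j hj
    unfold auxF
    rw [zero_mul, zero_add, one_mul]
    apply Finset.sum_eq_zero
    intro k hk
    have ht := hterm i k hk
    have hkey : x k * x i * (auxN G κ x i - auxN G κ x k) = 0 := by
      have hne : x k * x i * (auxN G κ x i - auxN G κ x k) ^ 2 = 0 := by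
        have h' : (x k / auxN G κ x i) * (x i / auxN G κ x k) *
            (auxN G κ x i - auxN G κ x k) ^ 2
            = x k * x i * (auxN G κ x i - auxN G κ x k) ^ 2 /
              (auxN G κ x i * auxN G κ x k) := by
          have h1 := hN0 i; have h2 := hN0 k
          field_simp
        rw [h'] at ht
        exact (div_eq_zero_iff.mp ht).resolve_right
          (mul_ne_zero (hN0 i) (hN0 k))
      rcases mul_eq_zero.mp hne with h1 | h2
      · simp [h1]
      · have h3 : auxN G κ x i - auxN G κ x k = 0 :=
          pow_eq_zero_iff (n := 2) (by norm_num) |>.mp h2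
        simp [h3]
    have : x k * x i / auxN G κ x k - x i * x k / auxN G κ x i
        = x k * x i * (auxN G κ x i - auxN G κ x k) /
          (auxN G κ x k * auxN G κ x i) := by
      have h1 := hN0 i; have h2 := hN0 k
      field_simp
    rw [this, hkey, zero_div]
  · -- critical → dissipation zero
    intro hf
    have key : (∑ k, ∑ j ∈ G.neighborFinset k,
        (x j / auxN G κ x k) * (x k / auxN G κ x j) *
          (auxN G κ x k - auxN G κ x j) ^ 2)
        = 2 * ∑ k, auxN G κ x k * auxF G κ 0 1 x k := by
      have hB : ∀ k, ∑ j ∈ G.neighborFinset k,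
          (x j * x k * auxN G κ x k / auxN G κ x j - x j * x k)
          = auxN G κ x k * auxF G κ 0 1 x k := by
        intro k
        unfold auxF
        rw [zero_mul, zero_add, one_mul, Finset.mul_sum]
        apply Finset.sum_congr rfl
        intro j _
        have h1 := hN0 j; have h2 := hN0 k
        field_simp
      have hsplit : ∀ k, ∀ j ∈ G.neighborFinset k,
          (x j / auxN G κ x k) * (x k / auxN G κ x j) *
            (auxN G κ x k - auxN G κ x j) ^ 2
          = (x j * x k * auxN G κ x k / auxN G κ x j - x j * x k)
            + (x k * x j * auxN G κ x j / auxN G κ x k - x k * x j) := by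
        intro k j _
        have h1 := hN0 j; have h2 := hN0 k
        field_simp
        ring
      calc ∑ k, ∑ j ∈ G.neighborFinset k,
            (x j / auxN G κ x k) * (x k / auxN G κ x j) *
              (auxN G κ x k - auxN G κ x j) ^ 2
          = ∑ k, ∑ j ∈ G.neighborFinset k,
            ((x j * x k * auxN G κ x k / auxN G κ x j - x j * x k)
              + (x k * x j * auxN G κ x j / auxN G κ x k - x k * x j)) := by
            apply Finset.sum_congr rfl
            intro k _
            exact Finset.sum_congr rfl (hsplit k)
        _ = (∑ k, ∑ j ∈ G.neighborFinset k,
              (x j * x k * auxN G κ x k / auxN G κ x j - x j * x k))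
            + ∑ k, ∑ j ∈ G.neighborFinset k,
              (x k * x j * auxN G κ x j / auxN G κ x k - x k * x j) := by
            rw [← Finset.sum_add_distrib]
            apply Finset.sum_congr rfl
            intro k _
            rw [← Finset.sum_add_distrib]
        _ = (∑ k, ∑ j ∈ G.neighborFinset k,
              (x j * x k * auxN G κ x k / auxN G κ x j - x j * x k))
            + ∑ k, ∑ j ∈ G.neighborFinset k,
              (x j * x k * auxN G κ x k / auxN G κ x j - x j * x k) := by
            congr 1
            exact (aux_swap_sum G
              (fun k j => x j * x k * auxN G κ x k / auxN G κ x j - x j * x k)).symm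
        _ = 2 * ∑ k, ∑ j ∈ G.neighborFinset k,
              (x j * x k * auxN G κ x k / auxN G κ x j - x j * x k) := by ring
        _ = 2 * ∑ k, auxN G κ x k * auxF G κ 0 1 x k := by
            congr 1
            exact Finset.sum_congr rfl fun k _ => hB k
    rw [key]
    simp only [hf, mul_zero, Finset.sum_const_zero]
end
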